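/- Let S = ℂ[x_0,…,x_n] and let e ≥ 2 be an integer. Let P_1, …, P_r and Q_1, …, Q_r be homogeneous polynomials with deg P_i = d_i satisfying 1 ≤ d_i and 2·d_i ≤ e, and deg Q_i = e − d_i, such that P_1, …, P_r, Q_1, …, Q_r is a regular sequence in S. Let I' = (P_1,…,P_r) and write (S/I')_j = S_j/(I' ∩ S_j). Consider the ℂ-linear map φ : ⊕_{i=1}^r (S/I')_{d_i} → (S/I')_e sending (g_1,…,g_r) to the class of Σ_{i=1}^r g_i·Q_i. Then dim_ℂ ker φ = a(a−1)/2, where a = #{i : 2·d_i = e}. -/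

import Mathlib

/-- The polynomial ring `S = ℂ[x_0, …, x_n]` (in `n+1` variables). -/
abbrev PolyS (n : ℕ) : Type := MvPolynomial (Fin (n + 1)) ℂ

/-- The graded piece `S_j` of homogeneous polynomials of degree `j` (together with `0`). -/
noncomputable abbrev polyGrade (n j : ℕ) : Submodule ℂ (PolyS n) :=
  MvPolynomial.homogeneousSubmodule (Fin (n + 1)) ℂ j

/-- The graded piece `(S/I)_j = S_j / (I ∩ S_j)` of the quotient by an ideal `I`. -/
noncomputable abbrev quotPiece (n : ℕ) (I : Ideal (PolyS n)) (j : ℕ) : Type :=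
  ↥(polyGrade n j) ⧸ (Submodule.comap (polyGrade n j).subtype (I.restrictScalars ℂ))


set_option maxRecDepth 4000

lemma syzygy {R : Type*} [CommRing R] (I₀ : Ideal R) :
    ∀ (m : ℕ) (x : Fin m → R),
    (∀ (k : Fin m) (s : R), x k * s ∈ I₀ ⊔ Ideal.span (x '' {j | j < k}) →
      s ∈ I₀ ⊔ Ideal.span (x '' {j | j < k})) →
    ∀ (g : Fin m → R), (∑ i, g i * x i) ∈ I₀ →
    ∃ c : Fin m → Fin m → R, (∀ i j, c j i = - c i j) ∧
      ∀ i, g i - ∑ j, c i j * x j ∈ I₀ := by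
  intro m
  induction m with
  | zero => exact fun x _ g _ => ⟨0, fun i j => by simp, fun i => i.elim0⟩
  | succ m ih =>
    intro x hx g hg
    have himg : x '' {j | j < Fin.last m} = Set.range (fun j : Fin m => x j.castSucc) := by
      ext y
      constructor
      · rintro ⟨j, hj, rfl⟩
        exact ⟨j.castPred (Fin.ne_last_of_lt hj),
          congrArg x (Fin.castSucc_castPred j (Fin.ne_last_of_lt hj))⟩
      · rintro ⟨j, rfl⟩
        exact ⟨j.castSucc, Fin.castSucc_lt_last j, rfl⟩
    have h1 : x (Fin.last m) * g (Fin.last m) ∈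
        I₀ ⊔ Ideal.span (x '' {j | j < Fin.last m}) := by
      have heq : x (Fin.last m) * g (Fin.last m) =
          (∑ i, g i * x i) - ∑ j : Fin m, g j.castSucc * x j.castSucc := by
        rw [Fin.sum_univ_castSucc]; ring
      rw [heq]
      refine sub_mem (Ideal.mem_sup_left hg) (Submodule.sum_mem _ fun j _ => ?_)
      refine Ideal.mem_sup_right ?_
      rw [himg]
      exact Ideal.mul_mem_left _ _ (Ideal.subset_span ⟨j, rfl⟩)
    have h2 := hx (Fin.last m) _ h1
    rw [himg] at h2
    obtain ⟨u, hu, v, hv, huv⟩ := Submodule.mem_sup.mp h2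
    obtain ⟨t, ht⟩ := (Submodule.mem_span_range_iff_exists_fun R).mp hv
    simp_rw [smul_eq_mul] at ht
    have hx'' : ∀ (k : Fin m) (s : R),
        (fun j : Fin m => x j.castSucc) k * s ∈
          I₀ ⊔ Ideal.span ((fun j : Fin m => x j.castSucc) '' {j | j < k}) →
        s ∈ I₀ ⊔ Ideal.span ((fun j : Fin m => x j.castSucc) '' {j | j < k}) := by
      intro k s hs
      have himg2 : (fun j : Fin m => x j.castSucc) '' {j | j < k} =
          x '' {j | j < k.castSucc} := by
        ext y
        constructor
        · rintro ⟨j, hj, rfl⟩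
          refine ⟨j.castSucc, ?_, rfl⟩
          simp only [Set.mem_setOf_eq, Fin.castSucc_lt_castSucc_iff]
          exact hj
        · rintro ⟨j, hj, rfl⟩
          have hjne : j ≠ Fin.last m :=
            Fin.ne_last_of_lt (lt_of_lt_of_le hj (Fin.castSucc_lt_last k).le)
          refine ⟨j.castPred hjne, ?_, congrArg x (Fin.castSucc_castPred j hjne)⟩
          simp only [Set.mem_setOf_eq, Fin.lt_def, Fin.coe_castPred]
          simpa only [Fin.lt_def, Fin.coe_castSucc, Set.mem_setOf_eq] using hj
      rw [himg2] at hs ⊢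
      exact hx k.castSucc s hs
    have hg'sum : (∑ j : Fin m, (g j.castSucc + t j * x (Fin.last m)) * x j.castSucc) ∈ I₀ := by
      have e1 : ∀ j : Fin m, (g j.castSucc + t j * x (Fin.last m)) * x j.castSucc
          = g j.castSucc * x j.castSucc + (t j * x j.castSucc) * x (Fin.last m) := fun j => by
        ring
      rw [Finset.sum_congr rfl (fun j _ => e1 j), Finset.sum_add_distrib, ← Finset.sum_mul, ht]
      have e2 : (∑ j : Fin m, g j.castSucc * x j.castSucc) + v * x (Fin.last m)
          = (∑ i, g i * x i) - u * x (Fin.last m) := by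
        rw [Fin.sum_univ_castSucc (f := fun i => g i * x i), ← huv]; ring
      rw [e2]
      exact sub_mem hg (Ideal.mul_mem_right _ _ hu)
    obtain ⟨c', hc'a, hc'⟩ := ih (fun j : Fin m => x j.castSucc) hx''
      (fun j => g j.castSucc + t j * x (Fin.last m)) hg'sum
    refine ⟨fun i j => Fin.lastCases (motive := fun _ => R)
      (Fin.lastCases (motive := fun _ => R) 0 (fun jp => t jp) j)
      (fun ip => Fin.lastCases (motive := fun _ => R) (-(t ip)) (fun jp => c' ip jp) j) i,
      fun i j => ?_, fun i => ?_⟩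
    · induction i using Fin.lastCases with
      | last =>
        induction j using Fin.lastCases with
        | last => simp
        | cast jp => simp
      | cast ip =>
        induction j using Fin.lastCases with
        | last => simp
        | cast jp => simp [hc'a ip jp]
    · induction i using Fin.lastCases with
      | last =>
        have hsum : (∑ j : Fin (m+1), (Fin.lastCases (motive := fun _ => R)
              (Fin.lastCases (motive := fun _ => R) 0 (fun jp => t jp) j)
              (fun ip => Fin.lastCases (motive := fun _ => R) (-(t ip))
                (fun jp => c' ip jp) j) (Fin.last m)) * x j)
            = ∑ j : Fin m, t j * x j.castSucc := by
          rw [Fin.sum_univ_castSucc]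
          simp
        rw [hsum, ht, show g (Fin.last m) - v = u from by rw [← huv]; ring]
        exact hu
      | cast ip =>
        have hsum : (∑ j : Fin (m+1), (Fin.lastCases (motive := fun _ => R)
              (Fin.lastCases (motive := fun _ => R) 0 (fun jp => t jp) j)
              (fun ip' => Fin.lastCases (motive := fun _ => R) (-(t ip'))
                (fun jp => c' ip' jp) j) ip.castSucc) * x j)
            = (∑ j : Fin m, c' ip j * x j.castSucc) + -(t ip * x (Fin.last m)) := by
          rw [Fin.sum_univ_castSucc]
          simp [neg_mul]
        rw [hsum]
        have heq : g ip.castSucc - ((∑ j : Fin m, c' ip j * x j.castSucc)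
              + -(t ip * x (Fin.last m)))
            = (g ip.castSucc + t ip * x (Fin.last m))
              - ∑ j : Fin m, c' ip j * x j.castSucc := by ring
        rw [heq]
        exact hc' ip

open MvPolynomial in
lemma comp_mul_homog {σ : Type*} (f q : MvPolynomial σ ℂ) {k : ℕ} (hq : q.IsHomogeneous k)
    (m : ℕ) :
    homogeneousComponent m (f * q) =
      if k ≤ m then homogeneousComponent (m - k) f * q else 0 := by
  classical
  conv_lhs => rw [← sum_homogeneousComponent f]
  rw [Finset.sum_mul, map_sum]
  have hterm : ∀ t, homogeneousComponent m (homogeneousComponent t f * q)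
      = if m = t + k then homogeneousComponent t f * q else 0 := by
    intro t
    have ht : (homogeneousComponent t f * q) ∈
        homogeneousSubmodule σ ℂ (t + k) := by
      exact (homogeneousComponent_isHomogeneous t f).mul hq
    exact homogeneousComponent_of_mem ht
  rw [Finset.sum_congr rfl fun t _ => hterm t]
  by_cases hk : k ≤ m
  · rw [if_pos hk]
    have hcond : ∀ t, (m = t + k) = (t = m - k) := by
      intro t; apply propext; omega
    simp_rw [hcond]
    rw [Finset.sum_ite_eq' (Finset.range (f.totalDegree + 1)) (m - k)
      (fun t => homogeneousComponent t f * q)]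
    by_cases hmem : m - k ∈ Finset.range (f.totalDegree + 1)
    · rw [if_pos hmem]
    · rw [if_neg hmem]
      have hlt : f.totalDegree < m - k := by
        simp only [Finset.mem_range, Nat.lt_succ_iff, not_le] at hmem
        exact hmem
      rw [homogeneousComponent_eq_zero _ f hlt, zero_mul]
  · rw [if_neg hk]
    exact Finset.sum_eq_zero fun t _ => if_neg (by omega)

open MvPolynomial in
lemma comp_mem_span {σ : Type*} {r : ℕ} (P : Fin r → MvPolynomial σ ℂ) (d : Fin r → ℕ)
    (hP : ∀ i, (P i).IsHomogeneous (d i)) {p : MvPolynomial σ ℂ}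
    (hp : p ∈ Ideal.span (Set.range P)) (m : ℕ) :
    homogeneousComponent m p ∈ Ideal.span (Set.range P) := by
  classical
  obtain ⟨f, hf⟩ := Ideal.mem_span_range_iff_exists_fun.mp hp
  rw [← hf, map_sum]
  refine Submodule.sum_mem _ fun i _ => ?_
  rw [comp_mul_homog (f i) (P i) (hP i) m]
  split
  · exact Ideal.mul_mem_left _ _ (Ideal.subset_span ⟨i, rfl⟩)
  · exact Submodule.zero_mem _

open MvPolynomial in
lemma sum_wPoly {σ : Type*} {r e : ℕ} (d : Fin r → ℕ) (Q : Fin r → MvPolynomial σ ℂ)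
    (lam : Fin r → Fin r → ℂ) (hanti : ∀ i j, lam j i = - lam i j)
    (hsupp : ∀ i j, d i + d j ≠ e → lam i j = 0) (i : Fin r) :
    (∑ p : {q : Fin r × Fin r // q.1 < q.2 ∧ d q.1 + d q.2 = e},
      lam p.1.1 p.1.2 • ((if i = p.1.1 then Q p.1.2 else 0) - (if i = p.1.2 then Q p.1.1 else 0)))
    = ∑ j, C (lam i j) * Q j := by
  classical
  have hdiag : ∀ j, lam j j = 0 := fun j => by
    have h := hanti j j
    have : lam j j + lam j j = 0 := by linear_combination h
    exact by
      have := add_self_eq_zero.mp this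
      exact this
  set F : Fin r × Fin r → MvPolynomial σ ℂ := fun q =>
    lam q.1 q.2 • ((if i = q.1 then Q q.2 else 0) - (if i = q.2 then Q q.1 else 0)) with hF
  have step1 : (∑ p : {q : Fin r × Fin r // q.1 < q.2 ∧ d q.1 + d q.2 = e}, F p.1)
      = ∑ q ∈ Finset.univ.filter (fun q : Fin r × Fin r => q.1 < q.2 ∧ d q.1 + d q.2 = e),
        F q := by
    exact (Finset.sum_subtype _ (fun q => by simp) F).symm
  have step2 : (∑ q ∈ Finset.univ.filter
        (fun q : Fin r × Fin r => q.1 < q.2 ∧ d q.1 + d q.2 = e), F q)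
      = ∑ q ∈ Finset.univ.filter (fun q : Fin r × Fin r => q.1 < q.2), F q := by
    refine Finset.sum_subset (Finset.monotone_filter_right _ fun q _ hq => hq.1) ?_
    intro q hq hq2
    simp only [Finset.mem_filter, Finset.mem_univ, true_and] at hq hq2
    have : d q.1 + d q.2 ≠ e := fun hc => hq2 ⟨hq, hc⟩
    rw [hF]
    simp [hsupp _ _ this]
  rw [step1, step2, Finset.sum_filter]
  have split : ∀ q : Fin r × Fin r, (if q.1 < q.2 then F q else 0)
      = (if q.1 < q.2 then lam q.1 q.2 • (if i = q.1 then Q q.2 else 0) else 0)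
        - (if q.1 < q.2 then lam q.1 q.2 • (if i = q.2 then Q q.1 else 0) else 0) := by
    intro q
    split <;> simp [hF, smul_sub]
  rw [Finset.sum_congr rfl fun q _ => split q, Finset.sum_sub_distrib]
  have hA : (∑ q : Fin r × Fin r,
        if q.1 < q.2 then lam q.1 q.2 • (if i = q.1 then Q q.2 else 0) else 0)
      = ∑ k, if i < k then lam i k • Q k else 0 := by
    rw [Fintype.sum_prod_type]
    have inner : ∀ j : Fin r, (∑ k, if j < k then lam j k • (if i = j then Q k else 0) else 0)
        = if i = j then (∑ k, if j < k then lam j k • Q k else 0) else 0 := by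
      intro j
      by_cases hij : i = j
      · simp [hij]
      · simp [hij]
    rw [Finset.sum_congr rfl fun j _ => inner j, Finset.sum_ite_eq Finset.univ i
      (fun j => ∑ k, if j < k then lam j k • Q k else 0)]
    simp
  have hB : (∑ q : Fin r × Fin r,
        if q.1 < q.2 then lam q.1 q.2 • (if i = q.2 then Q q.1 else 0) else 0)
      = ∑ j, if j < i then lam j i • Q j else 0 := by
    rw [Fintype.sum_prod_type]
    rw [Finset.sum_comm]
    have inner : ∀ k : Fin r, (∑ j, if j < k then lam j k • (if i = k then Q j else 0) else 0)
        = if i = k then (∑ j, if j < k then lam j k • Q j else 0) else 0 := by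
      intro k
      by_cases hik : i = k
      · simp [hik]
      · simp [hik]
    rw [Finset.sum_congr rfl fun k _ => inner k, Finset.sum_ite_eq Finset.univ i
      (fun k => ∑ j, if j < k then lam j k • Q j else 0)]
    simp
  rw [hA, hB, ← Finset.sum_sub_distrib]
  refine Finset.sum_congr rfl fun k _ => ?_
  rcases lt_trichotomy i k with h | h | h
  · rw [if_pos h, if_neg (asymm h), sub_zero, smul_eq_C_mul]
  · subst h
    simp [hdiag i]
  · rw [if_neg (asymm h), if_pos h, zero_sub, hanti i k, neg_smul, neg_neg, smul_eq_C_mul]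

lemma take_ofList_eq {R : Type*} [CommRing R] {r : ℕ} (P Q : Fin r → R) (k : Fin r) :
    Ideal.ofList ((List.ofFn P ++ List.ofFn Q).take (r + k)) =
      Ideal.span (Set.range P) ⊔ Ideal.span (Q '' {j | j < k}) := by
  have htake : (List.ofFn P ++ List.ofFn Q).take (r + k)
      = List.ofFn P ++ (List.ofFn Q).take k := by
    rw [List.take_append]
    congr 1
    · rw [List.take_of_length_le (by simp)]
    · congr 1
      simp
  rw [htake, Ideal.ofList_append]
  congr 1
  · exact congrArg Ideal.span (Set.ext fun y => by simp [List.mem_ofFn])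
  · refine congrArg Ideal.span (Set.ext fun y => ?_)
    simp only [Set.mem_setOf_eq, Set.mem_image]
    constructor
    · intro hy
      rw [List.mem_take_iff_getElem] at hy
      obtain ⟨i, hi, rfl⟩ := hy
      have hir : i < r := by simp at hi; omega
      refine ⟨⟨i, hir⟩, ?_, ?_⟩
      · show (⟨i, hir⟩ : Fin r) < k
        have : i < (k:ℕ) := by simp at hi; omega
        exact this
      · simp
    · rintro ⟨j, hj, rfl⟩
      rw [List.mem_take_iff_getElem]
      refine ⟨j, ?_, by simp⟩
      have h1 := j.isLt
      have h2 : (j:ℕ) < (k:ℕ) := hj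
      simp only [List.length_take, List.length_ofFn]
      omega

lemma reg_extract {R : Type*} [CommRing R] {r : ℕ} (P Q : Fin r → R)
    (hreg : RingTheory.Sequence.IsWeaklyRegular R (List.ofFn P ++ List.ofFn Q)) (k : Fin r)
    (s : R)
    (hs : Q k * s ∈ Ideal.span (Set.range P) ⊔ Ideal.span (Q '' {j | j < k})) :
    s ∈ Ideal.span (Set.range P) ⊔ Ideal.span (Q '' {j | j < k}) := by
  have hidx : (r + k : ℕ) < (List.ofFn P ++ List.ofFn Q).length := by
    have := k.isLt
    simp only [List.length_append, List.length_ofFn]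
    omega
  have hr := hreg.regular_mod_prev (r + k) hidx
  have hget : (List.ofFn P ++ List.ofFn Q)[(r + k : ℕ)] = Q k := by
    rw [List.getElem_append_right (by simp)]
    simp
  rw [hget, take_ofList_eq P Q k] at hr
  set J := Ideal.span (Set.range P) ⊔ Ideal.span (Q '' {j | j < k}) with hJ
  have h0 : Q k • (Submodule.Quotient.mk s : R ⧸ (J • ⊤ : Submodule R R)) = Q k • 0 := by
    rw [smul_zero, ← Submodule.Quotient.mk_smul, Submodule.Quotient.mk_eq_zero,
      smul_eq_mul, Ideal.mul_top]
    exact hs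
  have := hr h0
  rwa [Submodule.Quotient.mk_eq_zero, smul_eq_mul, Ideal.mul_top] at this

lemma indepQ {R : Type*} [CommRing R] [Algebra ℂ R] {r : ℕ} (P Q : Fin r → R)
    (hreg : RingTheory.Sequence.IsRegular R (List.ofFn P ++ List.ofFn Q)) (v : Fin r → ℂ)
    (hv : (∑ k, algebraMap ℂ R (v k) * Q k) ∈ Ideal.span (Set.range P)) : v = 0 := by
  classical
  by_contra hne
  have hF : (Finset.univ.filter (fun j => v j ≠ 0)).Nonempty := by
    obtain ⟨k, hk⟩ := Function.ne_iff.mp hne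
    refine ⟨k, ?_⟩
    simp only [Finset.mem_filter, Finset.mem_univ, true_and]
    simpa using hk
  set k := (Finset.univ.filter (fun j => v j ≠ 0)).max' hF with hkdef
  have hk : v k ≠ 0 :=
    (Finset.mem_filter.mp ((Finset.univ.filter (fun j => v j ≠ 0)).max'_mem hF)).2
  have hmax : ∀ j, k < j → v j = 0 := by
    intro j hj
    by_contra hvj
    have hjF : j ∈ Finset.univ.filter (fun j => v j ≠ 0) := by simp [hvj]
    exact absurd (Finset.le_max' _ j hjF) (not_le.mpr hj)
  set J := Ideal.span (Set.range P) ⊔ Ideal.span (Q '' {j | j < k}) with hJ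
  have hQk : Q k * algebraMap ℂ R (v k) ∈ J := by
    have hsplit : algebraMap ℂ R (v k) * Q k = (∑ j, algebraMap ℂ R (v j) * Q j)
        - ∑ j ∈ Finset.univ.erase k, algebraMap ℂ R (v j) * Q j := by
      rw [eq_sub_iff_add_eq]
      exact Finset.add_sum_erase Finset.univ (fun j => algebraMap ℂ R (v j) * Q j)
        (Finset.mem_univ k)
    rw [mul_comm, hsplit]
    refine sub_mem (Ideal.mem_sup_left hv) (Submodule.sum_mem _ fun j hj => ?_)
    rcases lt_trichotomy j k with h | h | h
    · exact Ideal.mem_sup_right (Ideal.mul_mem_left _ _ (Ideal.subset_span ⟨j, h, rfl⟩))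
    · exact absurd h (Finset.ne_of_mem_erase hj)
    · rw [hmax j h, map_zero, zero_mul]
      exact Submodule.zero_mem _
  have h1 : (1 : R) ∈ J := by
    have := reg_extract P Q hreg.toIsWeaklyRegular k _ hQk
    have h2 : (1 : R) = algebraMap ℂ R (v k)⁻¹ * algebraMap ℂ R (v k) := by
      rw [← map_mul, inv_mul_cancel₀ hk, map_one]
    rw [h2]
    exact Ideal.mul_mem_left _ _ this
  have hJtop : J = ⊤ := Ideal.eq_top_of_isUnit_mem _ h1 isUnit_one
  have hle : J ≤ Ideal.ofList (List.ofFn P ++ List.ofFn Q) := by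
    rw [hJ]
    refine sup_le (Ideal.span_le.mpr ?_) (Ideal.span_le.mpr ?_)
    · rintro y ⟨i, rfl⟩
      exact Ideal.subset_span (by simp [List.mem_ofFn])
    · rintro y ⟨j, _, rfl⟩
      exact Ideal.subset_span (by simp [List.mem_ofFn])
  have htop : Ideal.ofList (List.ofFn P ++ List.ofFn Q) = ⊤ :=
    top_le_iff.mp (hJtop ▸ hle)
  have := hreg.top_ne_smul
  rw [smul_eq_mul, Ideal.mul_top] at this
  exact this htop.symm

set_option maxHeartbeats 2000000 in
/-- if `P₁,…,P_r,Q₁,…,Q_r` is a regular sequence with `deg Pᵢ = dᵢ`,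
`1 ≤ dᵢ`, `2dᵢ ≤ e`, `deg Qᵢ = e − dᵢ`, and `I' = (P₁,…,P_r)`, then the kernel of the
map `φ : ⊕ᵢ (S/I')_{dᵢ} → (S/I')_e`, `(g₁,…,g_r) ↦ Σ gᵢ·Qᵢ`, has dimension `a(a−1)/2`
where `a = #{i : 2dᵢ = e}`. -/
theorem statement2 (n r e : ℕ) (he : 2 ≤ e)
    (P Q : Fin r → PolyS n) (d : Fin r → ℕ)
    (hd1 : ∀ i, 1 ≤ d i) (hd2 : ∀ i, 2 * d i ≤ e)
    (hP : ∀ i, (P i).IsHomogeneous (d i))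
    (hQ : ∀ i, (Q i).IsHomogeneous (e - d i))
    (hreg : RingTheory.Sequence.IsRegular (PolyS n) (List.ofFn P ++ List.ofFn Q))
    (I' : Ideal (PolyS n)) (hI' : I' = Ideal.span (Set.range P))
    (a : ℕ) (ha : a = (Finset.univ.filter (fun i : Fin r => 2 * d i = e)).card)
    (φ : ((i : Fin r) → quotPiece n I' (d i)) →ₗ[ℂ] quotPiece n I' e)
    (hφ : ∀ g : (i : Fin r) → polyGrade n (d i),
      φ (fun i => Submodule.Quotient.mk (g i)) =
        Submodule.Quotient.mk ⟨∑ i, (g i : PolyS n) * Q i, by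
          refine Submodule.sum_mem _ fun i _ => ?_
          have h1 := ((MvPolynomial.mem_homogeneousSubmodule _ _).1 (g i).2).mul (hQ i)
          have hde : d i ≤ e := by have := hd2 i; omega
          rw [Nat.add_sub_cancel' hde] at h1
          exact (MvPolynomial.mem_homogeneousSubmodule _ _).2 h1⟩) :
    Module.finrank ℂ (LinearMap.ker φ) = a * (a - 1) / 2 := by
  classical
  subst hI' ha
  -- the family of Koszul-type kernel elements
  set wp : (Fin r × Fin r) → Fin r → PolyS n := fun q i =>
    (if i = q.1 then Q q.2 else 0) - (if i = q.2 then Q q.1 else 0) with hwp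
  have hwmem : ∀ (q : Fin r × Fin r), d q.1 + d q.2 = e → ∀ i, wp q i ∈ polyGrade n (d i) := by
    intro q hq i
    have hq1 : d q.1 ≤ e := by omega
    have hq2 : d q.2 ≤ e := by omega
    refine sub_mem ?_ ?_
    · split
      · rename_i h
        subst h
        have hdeq : d q.1 = e - d q.2 := by omega
        rw [MvPolynomial.mem_homogeneousSubmodule, hdeq]
        exact hQ q.2
      · exact Submodule.zero_mem _
    · split
      · rename_i h
        subst h
        have hdeq : d q.2 = e - d q.1 := by omega
        rw [MvPolynomial.mem_homogeneousSubmodule, hdeq]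
        exact hQ q.1
      · exact Submodule.zero_mem _
  set w : {q : Fin r × Fin r // q.1 < q.2 ∧ d q.1 + d q.2 = e} →
      ((i : Fin r) → quotPiece n (Ideal.span (Set.range P)) (d i)) := fun p i =>
    Submodule.Quotient.mk ⟨wp p.1 i, hwmem p.1 p.2.2 i⟩ with hw
  -- each w p is in the kernel
  have hwker : ∀ p, w p ∈ LinearMap.ker φ := by
    intro p
    rw [LinearMap.mem_ker]
    have h0 := hφ (fun i => ⟨wp p.1 i, hwmem p.1 p.2.2 i⟩)
    have hsum0 : (∑ i, ((⟨wp p.1 i, hwmem p.1 p.2.2 i⟩ : polyGrade n (d i)) : PolyS n) * Q i)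
        = 0 := by
      have hexp : ∀ i : Fin r, ((⟨wp p.1 i, hwmem p.1 p.2.2 i⟩ : polyGrade n (d i)) : PolyS n)
          * Q i = (if i = p.1.1 then Q p.1.2 * Q i else 0)
            - (if i = p.1.2 then Q p.1.1 * Q i else 0) := by
        intro i
        show wp p.1 i * Q i = _
        rw [hwp]
        beta_reduce
        simp only [sub_mul, ite_mul, zero_mul]
      rw [Finset.sum_congr rfl fun i _ => hexp i, Finset.sum_sub_distrib,
        Finset.sum_ite_eq' Finset.univ p.1.1 (fun i => Q p.1.2 * Q i),
        Finset.sum_ite_eq' Finset.univ p.1.2 (fun i => Q p.1.1 * Q i)]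
      simp [mul_comm]
    rw [show w p = (fun i => Submodule.Quotient.mk ⟨wp p.1 i, hwmem p.1 p.2.2 i⟩) from rfl, h0]
    have : (⟨∑ i, ((⟨wp p.1 i, hwmem p.1 p.2.2 i⟩ : polyGrade n (d i)) : PolyS n) * Q i, by
        refine Submodule.sum_mem _ fun i _ => ?_
        have h1 := ((MvPolynomial.mem_homogeneousSubmodule _ _).1
          (⟨wp p.1 i, hwmem p.1 p.2.2 i⟩ : polyGrade n (d i)).2).mul (hQ i)
        have hde : d i ≤ e := by have := hd2 i; omega
        rw [Nat.add_sub_cancel' hde] at h1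
        exact (MvPolynomial.mem_homogeneousSubmodule _ _).2 h1⟩ : polyGrade n e) = 0 :=
      Subtype.ext (by simpa using hsum0)
    rw [this, Submodule.Quotient.mk_zero]
  -- linear independence of the family w
  have hindep : LinearIndependent ℂ w := by
    suffices key : ∀ μ : {q : Fin r × Fin r // q.1 < q.2 ∧ d q.1 + d q.2 = e} → ℂ,
        ∑ i, μ i • w i = 0 → ∀ i, μ i = 0 by
      refine (Fintype.linearIndependent_iffₛ (R := ℂ) (v := w)).mpr fun f g hfg i => ?_
      have := key (f - g) (by
        funext k
        have := congrFun hfg k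
        simp only [Finset.sum_apply, Pi.smul_apply, Pi.sub_apply, sub_smul,
          Finset.sum_sub_distrib, Pi.zero_apply] at this ⊢
        rw [this, sub_self])
      exact sub_eq_zero.mp (this i)
    intro μ hμ
    set lam : Fin r → Fin r → ℂ := fun i j =>
      if h : i < j ∧ d i + d j = e then μ ⟨(i,j), h⟩
      else if h' : j < i ∧ d j + d i = e then -μ ⟨(j,i), h'⟩
      else 0 with hlam
    have hlam_lt : ∀ i j (h : i < j) (hd : d i + d j = e), lam i j = μ ⟨(i,j), ⟨h,hd⟩⟩ := by
      intro i j h hd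
      rw [hlam]
      beta_reduce
      rw [dif_pos ⟨h,hd⟩]
    have hlam_gt : ∀ i j (h : j < i) (hd : d j + d i = e), lam i j = -μ ⟨(j,i), ⟨h,hd⟩⟩ := by
      intro i j h hd
      rw [hlam]
      beta_reduce
      rw [dif_neg (fun hc => absurd hc.1 (asymm h)), dif_pos ⟨h,hd⟩]
    have hlam_0 : ∀ i j, ¬(i < j ∧ d i + d j = e) → ¬(j < i ∧ d j + d i = e) → lam i j = 0 := by
      intro i j h1 h2
      rw [hlam]
      beta_reduce
      rw [dif_neg h1, dif_neg h2]
    have hμp : ∀ p, lam p.1.1 p.1.2 = μ p := by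
      intro p
      rw [hlam_lt p.1.1 p.1.2 p.2.1 p.2.2]
    have hanti : ∀ i j, lam j i = - lam i j := by
      intro i j
      rcases lt_trichotomy i j with hlt | heq | hgt
      · by_cases hd : d i + d j = e
        · rw [hlam_gt j i hlt hd, hlam_lt i j hlt hd]
        · rw [hlam_0 j i (fun hc => absurd hc.1 (asymm hlt)) (fun hc => hd hc.2),
            hlam_0 i j (fun hc => hd hc.2) (fun hc => absurd hc.1 (asymm hlt)), neg_zero]
      · subst heq
        rw [hlam_0 i i (fun hc => lt_irrefl i hc.1) (fun hc => lt_irrefl i hc.1), neg_zero]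
      · by_cases hd : d j + d i = e
        · rw [hlam_lt j i hgt hd, hlam_gt i j hgt hd, neg_neg]
        · rw [hlam_0 j i (fun hc => hd hc.2) (fun hc => absurd hc.1 (asymm hgt)),
            hlam_0 i j (fun hc => absurd hc.1 (asymm hgt)) (fun hc => hd hc.2), neg_zero]
    have hsupp : ∀ i j, d i + d j ≠ e → lam i j = 0 := by
      intro i j hd
      exact hlam_0 i j (fun hc => hd hc.2)
        (fun hc => hd (by rw [Nat.add_comm]; exact hc.2))
    have hpoly : ∀ i, (∑ j, MvPolynomial.C (lam i j) * Q j) ∈ Ideal.span (Set.range P) := by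
      intro i
      have hcomp := congrFun hμ i
      rw [Finset.sum_apply] at hcomp
      simp only [Pi.smul_apply, Pi.zero_apply, hw] at hcomp
      simp only [← Submodule.mkQ_apply, ← map_smul, ← map_sum] at hcomp
      rw [Submodule.mkQ_apply, Submodule.Quotient.mk_eq_zero, Submodule.mem_comap] at hcomp
      have hval : ((polyGrade n (d i)).subtype
          (∑ p : {q : Fin r × Fin r // q.1 < q.2 ∧ d q.1 + d q.2 = e},
            μ p • ⟨wp p.1 i, hwmem p.1 p.2.2 i⟩)) =
          ∑ p : {q : Fin r × Fin r // q.1 < q.2 ∧ d q.1 + d q.2 = e},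
            μ p • wp p.1 i := by
        rw [map_sum]
        rfl
      rw [hval] at hcomp
      have hsum : (∑ p : {q : Fin r × Fin r // q.1 < q.2 ∧ d q.1 + d q.2 = e},
            μ p • wp p.1 i) = ∑ j, MvPolynomial.C (lam i j) * Q j := by
        rw [← sum_wPoly d Q lam hanti hsupp i]
        refine Finset.sum_congr rfl fun p _ => ?_
        rw [hμp p, hwp]
      rw [hsum] at hcomp
      exact hcomp
    have hlam0 : ∀ i j, lam i j = 0 := by
      intro i j
      have := indepQ P Q hreg (fun j => lam i j) (by
        rw [MvPolynomial.algebraMap_eq]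
        exact hpoly i)
      exact congrFun this j
    intro p
    rw [← hμp p]
    exact hlam0 p.1.1 p.1.2
  -- spanning
  have hspan : LinearMap.ker φ ≤ Submodule.span ℂ (Set.range w) := by
    intro x hx
    have hrep : ∀ i, ∃ y : polyGrade n (d i), Submodule.Quotient.mk y = x i :=
      fun i => Submodule.Quotient.mk_surjective _ (x i)
    choose g hg using hrep
    have hxg : x = fun i => Submodule.Quotient.mk (g i) := funext fun i => (hg i).symm
    have hker0 : φ x = 0 := hx
    rw [hxg, hφ g] at hker0
    rw [Submodule.Quotient.mk_eq_zero, Submodule.mem_comap] at hker0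
    have hmem : (∑ i, ((g i : PolyS n)) * Q i) ∈ Ideal.span (Set.range P) := hker0
    obtain ⟨c, hca, hc⟩ := syzygy (Ideal.span (Set.range P)) r Q
      (fun k s hs => reg_extract P Q hreg.toIsWeaklyRegular k s hs)
      (fun i => (g i : PolyS n)) hmem
    set lam : Fin r → Fin r → ℂ := fun i j =>
      if d i + d j = e then MvPolynomial.coeff 0 (c i j) else 0 with hlam
    have hanti : ∀ i j, lam j i = - lam i j := by
      intro i j
      rw [hlam]
      beta_reduce
      by_cases hd : d i + d j = e
      · rw [if_pos (by omega : d j + d i = e), if_pos hd, hca i j]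
        simp
      · rw [if_neg (by omega : ¬ d j + d i = e), if_neg hd, neg_zero]
    have hsupp : ∀ i j, d i + d j ≠ e → lam i j = 0 := by
      intro i j hd
      rw [hlam]
      beta_reduce
      rw [if_neg hd]
    have hcomp : ∀ i, ((g i : PolyS n)) - ∑ j, MvPolynomial.C (lam i j) * Q j
        ∈ Ideal.span (Set.range P) := by
      intro i
      have h1 := comp_mem_span P d hP (hc i) (d i)
      have heq : MvPolynomial.homogeneousComponent (d i)
            ((g i : PolyS n) - ∑ j, c i j * Q j)
          = (g i : PolyS n) - ∑ j, MvPolynomial.C (lam i j) * Q j := by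
        rw [map_sub, map_sum]
        congr 1
        · rw [MvPolynomial.homogeneousComponent_of_mem (g i).2, if_pos rfl]
        · refine Finset.sum_congr rfl fun j _ => ?_
          rw [comp_mul_homog (c i j) (Q j) (hQ j) (d i)]
          have hb1 : 2 * d i ≤ e := hd2 i
          have hb2 : 2 * d j ≤ e := hd2 j
          by_cases hd : d i + d j = e
          · rw [if_pos (by omega : e - d j ≤ d i),
              show d i - (e - d j) = 0 by omega,
              MvPolynomial.homogeneousComponent_zero, hlam]
            beta_reduce
            rw [if_pos hd]
          · rw [if_neg (by omega : ¬ e - d j ≤ d i), hlam]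
            beta_reduce
            rw [if_neg hd, map_zero, zero_mul]
      rw [← heq]
      exact h1
    rw [Submodule.mem_span_range_iff_exists_fun]
    refine ⟨fun p => lam p.1.1 p.1.2, ?_⟩
    rw [hxg]
    funext i
    rw [Finset.sum_apply]
    simp only [Pi.smul_apply, hw]
    simp only [← Submodule.mkQ_apply, ← map_smul, ← map_sum]
    rw [Submodule.mkQ_apply, Submodule.mkQ_apply, Submodule.Quotient.eq]
    rw [Submodule.mem_comap]
    have hval : ((polyGrade n (d i)).subtype
        ((∑ p : {q : Fin r × Fin r // q.1 < q.2 ∧ d q.1 + d q.2 = e},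
          lam p.1.1 p.1.2 • ⟨wp p.1 i, hwmem p.1 p.2.2 i⟩) - g i)) =
        (∑ p : {q : Fin r × Fin r // q.1 < q.2 ∧ d q.1 + d q.2 = e},
          lam p.1.1 p.1.2 • wp p.1 i) - (g i : PolyS n) := by
      rw [map_sub, map_sum]
      rfl
    rw [hval]
    have hsum : (∑ p : {q : Fin r × Fin r // q.1 < q.2 ∧ d q.1 + d q.2 = e},
          lam p.1.1 p.1.2 • wp p.1 i) = ∑ j, MvPolynomial.C (lam i j) * Q j := by
      rw [← sum_wPoly d Q lam hanti hsupp i]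
      try rfl
    rw [hsum]
    have : (∑ j, MvPolynomial.C (lam i j) * Q j) - (g i : PolyS n)
        = -(((g i : PolyS n)) - ∑ j, MvPolynomial.C (lam i j) * Q j) := by ring
    rw [this]
    exact neg_mem (hcomp i)
  -- kernel equals span
  have hker : LinearMap.ker φ = Submodule.span ℂ (Set.range w) :=
    le_antisymm hspan (Submodule.span_le.mpr (Set.range_subset_iff.mpr hwker))
  rw [hker, finrank_span_eq_card hindep]
  -- cardinality count
  have hcard : Fintype.card {q : Fin r × Fin r // q.1 < q.2 ∧ d q.1 + d q.2 = e}
      = (Finset.univ.filter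
          (fun q : Fin r × Fin r => q.1 < q.2 ∧ d q.1 + d q.2 = e)).card :=
    Fintype.card_subtype _
  rw [hcard]
  set T := Finset.univ.filter (fun i : Fin r => 2 * d i = e) with hT
  have hfeq : Finset.univ.filter (fun q : Fin r × Fin r => q.1 < q.2 ∧ d q.1 + d q.2 = e)
      = T.offDiag.filter (fun q => q.1 < q.2) := by
    ext q
    simp only [Finset.mem_filter, Finset.mem_univ, true_and, Finset.mem_offDiag, hT]
    constructor
    · rintro ⟨hlt, hde⟩
      have h1 := hd2 q.1
      have h2 := hd2 q.2
      exact ⟨⟨by omega, by omega, ne_of_lt hlt⟩, hlt⟩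
    · rintro ⟨⟨h1, h2, _⟩, hlt⟩
      exact ⟨hlt, by omega⟩
  rw [hfeq]
  have hswap : (T.offDiag.filter (fun q => ¬ q.1 < q.2)).card
      = (T.offDiag.filter (fun q => q.1 < q.2)).card := by
    refine Finset.card_bij (fun q _ => q.swap) ?_ ?_ ?_
    · intro q hq
      simp only [Finset.mem_filter, Finset.mem_offDiag] at hq ⊢
      obtain ⟨⟨hq1, hq2, hne⟩, hnl⟩ := hq
      refine ⟨⟨hq2, hq1, fun hc => hne hc.symm⟩, ?_⟩
      show q.2 < q.1
      rcases lt_trichotomy q.1 q.2 with h | h | h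
      · exact absurd h hnl
      · exact absurd h hne
      · exact h
    · intro q1 hq1 q2 hq2 hswap
      exact Prod.swap_injective hswap
    · intro q hq
      simp only [Finset.mem_filter, Finset.mem_offDiag] at hq ⊢
      refine ⟨q.swap, ⟨⟨hq.1.2.1, hq.1.1, fun hc => hq.1.2.2 hc.symm⟩, ?_⟩, q.swap_swap⟩
      show ¬ q.2 < q.1
      exact asymm hq.2
  have hsplit : (T.offDiag.filter (fun q => q.1 < q.2)).card
      + (T.offDiag.filter (fun q => ¬ q.1 < q.2)).card = T.offDiag.card := by
    simpa using Finset.card_filter_add_card_filter_not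
      (s := T.offDiag) (p := fun q : Fin r × Fin r => q.1 < q.2)
  have hod : T.offDiag.card = T.card * T.card - T.card := Finset.offDiag_card _
  have hmul : T.card * (T.card - 1) = T.card * T.card - T.card := by
    rw [Nat.mul_sub_one]
  have h2 : T.offDiag.card = 2 * (T.offDiag.filter (fun q => q.1 < q.2)).card := by
    omega
  rw [hmul, ← hod, h2]
  omega
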